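/- Jacobi's identity: for 0<q<1, \sum_{i=0}^{\infty} (-1)^i (2i+1) q^{i(i+1)} = \prod_{i=1}^{\infty} (1 - q^{2i})^3; in particular this sum is strictly positive. -/

import Mathlib

open Finset Filter Topology

set_option linter.unusedSectionVars false
set_option linter.unusedVariables false

namespace JacobiAux

/-- Partial product `∏_{i=1}^k (1 - q^{2i})`. -/
noncomputable def Dq (q : ℝ) (k : ℕ) : ℝ := ∏ j ∈ range k, (1 - q ^ (2 * (j + 1)))

/-- Numerator of the Gaussian binomial coefficient. -/
noncomputable def Nq (q : ℝ) (n k : ℕ) : ℝ := ∏ j ∈ range k, (1 - q ^ (2 * (n + 1 + j) - 2 * k))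

/-- Gaussian binomial coefficient `[n choose k]_{q²}`. -/
noncomputable def bq (q : ℝ) (n k : ℕ) : ℝ := Nq q n k / Dq q k

variable {q : ℝ} (hq : 0 < q) (hq1 : q < 1)

include hq hq1

lemma factor_pos {m : ℕ} (hm : 1 ≤ m) : 0 < 1 - q ^ m := by
  have := pow_lt_one₀ hq.le hq1 (by omega : m ≠ 0)
  linarith

lemma factor_le_one {m : ℕ} : 1 - q ^ m ≤ 1 := by
  have := pow_pos hq m; linarith

lemma Dq_pos (k : ℕ) : 0 < Dq q k :=
  Finset.prod_pos fun j _ => factor_pos hq hq1 (by omega)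

lemma Dq_le_one (k : ℕ) : Dq q k ≤ 1 := by
  apply Finset.prod_le_one
  · exact fun j _ => (factor_pos hq hq1 (by omega)).le
  · exact fun j _ => factor_le_one hq hq1

lemma Dq_antitone : Antitone (Dq q) := by
  apply antitone_nat_of_succ_le
  intro n
  rw [Dq, Finset.prod_range_succ]
  have h1 := Dq_pos hq hq1 n
  have h2 : 1 - q ^ (2 * (n + 1)) ≤ 1 := factor_le_one hq hq1
  rw [show (∏ j ∈ range n, (1 - q ^ (2 * (j + 1)))) = Dq q n from rfl]
  nlinarith

lemma Dq_succ (k : ℕ) : Dq q (k + 1) = Dq q k * (1 - q ^ (2 * (k + 1))) := by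
  rw [Dq, Finset.prod_range_succ]; rfl

lemma Nq_nonneg {n k : ℕ} (hk : k ≤ n + 1) : 0 ≤ Nq q n k := by
  apply Finset.prod_nonneg
  intro j hj
  rcases Nat.lt_or_ge (2 * k) (2 * (n + 1 + j)) with h | h
  · exact (factor_pos hq hq1 (by omega)).le
  · have : 2 * (n + 1 + j) - 2 * k = 0 := by omega
    rw [this]; simp

lemma Nq_le_one {n k : ℕ} (hk : k ≤ n) : Nq q n k ≤ 1 := by
  apply Finset.prod_le_one
  · intro j hj; exact (factor_pos hq hq1 (by omega)).le
  · intro j hj; exact factor_le_one hq hq1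

lemma Nq_top (n : ℕ) : Nq q n (n + 1) = 0 := by
  apply Finset.prod_eq_zero (Finset.mem_range.2 (Nat.succ_pos n))
  simp

lemma Nq_self (n : ℕ) : Nq q n n = Dq q n := by
  apply Finset.prod_congr rfl
  intro j hj
  simp only [Finset.mem_range] at hj
  have : 2 * (n + 1 + j) - 2 * n = 2 * (j + 1) := by omega
  rw [this]

/-- Peel the bottom factor. -/
lemma Nq_peel_bot {n k : ℕ} (hk : 1 ≤ k) (hk2 : k ≤ n + 1) :
    Nq q n k = (1 - q ^ (2 * (n + 1) - 2 * k)) * Nq q n (k - 1) := by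
  obtain ⟨k, rfl⟩ : ∃ m, k = m + 1 := ⟨k - 1, by omega⟩
  rw [Nq, Finset.prod_range_succ', mul_comm]
  refine congrArg₂ (· * ·) (by norm_num) ?_
  apply Finset.prod_congr rfl
  intro j hj
  simp only [Finset.mem_range] at hj
  have : 2 * (n + 1 + (j + 1)) - 2 * (k + 1) = 2 * (n + 1 + j) - 2 * (k + 1 - 1) := by omega
  rw [this]

/-- Peel the top factor of `Nq q (n+1) k`. -/
lemma Nq_peel_top {n k : ℕ} (hk : 1 ≤ k) (hk2 : k ≤ n + 1) :
    Nq q (n + 1) k = Nq q n (k - 1) * (1 - q ^ (2 * (n + 1))) := by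
  obtain ⟨k, rfl⟩ : ∃ m, k = m + 1 := ⟨k - 1, by omega⟩
  rw [Nq, Finset.prod_range_succ]
  refine congrArg₂ (· * ·) ?_ ?_
  · apply Finset.prod_congr rfl
    intro j hj
    simp only [Finset.mem_range] at hj
    have : 2 * (n + 1 + 1 + j) - 2 * (k + 1) = 2 * (n + 1 + j) - 2 * (k + 1 - 1) := by omega
    rw [this]
  · have : 2 * (n + 1 + 1 + k) - 2 * (k + 1) = 2 * (n + 1) := by omega
    rw [this]

lemma Nq_pascal {n k : ℕ} (hk : 1 ≤ k) (hk2 : k ≤ n + 1) :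
    Nq q (n + 1) k = Nq q n k + q ^ (2 * (n + 1) - 2 * k) * (1 - q ^ (2 * k)) * Nq q n (k - 1) := by
  rw [Nq_peel_top hq hq1 hk hk2, Nq_peel_bot hq hq1 hk hk2]
  have hpow : q ^ (2 * (n + 1) - 2 * k) * q ^ (2 * k) = q ^ (2 * (n + 1)) := by
    rw [← pow_add]; congr 1; omega
  linear_combination Nq q n (k - 1) * hpow

lemma bq_pascal {n k : ℕ} (hk : 1 ≤ k) (hk2 : k ≤ n + 1) :
    bq q (n + 1) k = bq q n k + q ^ (2 * (n + 1) - 2 * k) * bq q n (k - 1) := by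
  obtain ⟨k, rfl⟩ : ∃ m, k = m + 1 := ⟨k - 1, by omega⟩
  have hD : Dq q (k + 1) = Dq q k * (1 - q ^ (2 * (k + 1))) := Dq_succ hq hq1 k
  have h1 : Dq q k ≠ 0 := (Dq_pos hq hq1 k).ne'
  have h2 : (1 - q ^ (2 * (k + 1))) ≠ 0 := (factor_pos hq hq1 (by omega)).ne'
  rw [bq, bq, bq, Nq_pascal hq hq1 hk hk2]
  simp only [Nat.add_sub_cancel]
  rw [hD]
  field_simp

lemma bq_zero (n : ℕ) : bq q n 0 = 1 := by simp [bq, Nq, Dq]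

lemma bq_top (n : ℕ) : bq q n (n + 1) = 0 := by simp [bq, Nq_top hq hq1]

lemma bq_self (n : ℕ) : bq q n n = 1 := by
  rw [bq, Nq_self hq hq1, div_self (Dq_pos hq hq1 n).ne']

/-- The Gauss binomial theorem for `∏ (1 + z q^{2j+1})`. -/
lemma gauss (n : ℕ) (z : ℝ) :
    ∏ j ∈ range n, (1 + z * q ^ (2 * j + 1)) =
      ∑ k ∈ range (n + 1), bq q n k * q ^ (k ^ 2) * z ^ k := by
  induction n with
  | zero => simp [bq_zero hq hq1]
  | succ n ih =>
    rw [Finset.prod_range_succ, ih]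
    have key : ∀ k ∈ range (n + 1), bq q (n + 1) (k + 1) * q ^ ((k + 1) ^ 2) * z ^ (k + 1)
        = bq q n (k + 1) * q ^ ((k + 1) ^ 2) * z ^ (k + 1)
          + (bq q n k * q ^ (k ^ 2) * z ^ k) * (z * q ^ (2 * n + 1)) := by
      intro k hk
      simp only [Finset.mem_range] at hk
      rw [bq_pascal hq hq1 (by omega) (by omega)]
      simp only [Nat.add_sub_cancel]
      have hpow : q ^ (2 * (n + 1) - 2 * (k + 1)) * q ^ ((k + 1) ^ 2)
          = q ^ (k ^ 2) * q ^ (2 * n + 1) := by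
        rw [← pow_add, ← pow_add]; congr 1
        have h2 : 2 * (k + 1) ≤ 2 * (n + 1) := by omega
        zify [h2]; ring
      linear_combination bq q n k * z ^ (k + 1) * hpow
    rw [Finset.sum_range_succ' (fun k => bq q (n + 1) k * q ^ (k ^ 2) * z ^ k) (n + 1)]
    rw [Finset.sum_congr rfl key]
    rw [Finset.sum_add_distrib]
    have htop : ∑ k ∈ range (n + 1), bq q n (k + 1) * q ^ ((k + 1) ^ 2) * z ^ (k + 1)
        = ∑ k ∈ range n, bq q n (k + 1) * q ^ ((k + 1) ^ 2) * z ^ (k + 1) := by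
      rw [Finset.sum_range_succ, bq_top hq hq1]; simp
    rw [htop, ← Finset.sum_mul]
    rw [Finset.sum_range_succ' (fun k => bq q n k * q ^ (k ^ 2) * z ^ k) n]
    simp only [bq_zero hq hq1]
    ring

/-- The natural-number exponent `(k-n)(k-n+1)` (written symmetrically). -/
def eJ (n k : ℕ) : ℕ := (k - n) * (k - n + 1) + (n - k) * (n - k - 1)

lemma R_root (n : ℕ) (hn : 1 ≤ n) :
    ∑ k ∈ range (2 * n + 1), bq q (2 * n) k * q ^ (k ^ 2) * (-(q ^ (2 * n - 1))⁻¹) ^ k = 0 := by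
  have hg := gauss hq hq1 (2 * n) (-(q ^ (2 * n - 1))⁻¹)
  rw [← hg]
  apply Finset.prod_eq_zero (i := n - 1) (Finset.mem_range.2 (by omega))
  have he : 2 * (n - 1) + 1 = 2 * n - 1 := by omega
  have hc : q ^ (2 * n - 1) ≠ 0 := pow_ne_zero _ hq.ne'
  rw [he, neg_mul, inv_mul_cancel₀ hc]
  ring

lemma R_deriv (n : ℕ) (hn : 1 ≤ n) :
    ∑ k ∈ range (2 * n + 1), bq q (2 * n) k * q ^ (k ^ 2) * k * (-(q ^ (2 * n - 1))⁻¹) ^ (k - 1)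
      = q ^ (2 * n - 1) *
        ∏ j ∈ (range (2 * n)).erase (n - 1), (1 + (-(q ^ (2 * n - 1))⁻¹) * q ^ (2 * j + 1)) := by
  suffices h : ∀ c w₀ : ℝ, c = q ^ (2 * n - 1) → w₀ = -c⁻¹ →
      ∑ k ∈ range (2 * n + 1), bq q (2 * n) k * q ^ (k ^ 2) * k * w₀ ^ (k - 1)
        = c * ∏ j ∈ (range (2 * n)).erase (n - 1), (1 + w₀ * q ^ (2 * j + 1)) by
    exact h _ _ rfl rfl
  intro c w₀ hc_def hw_def
  have hc : c ≠ 0 := by rw [hc_def]; exact pow_ne_zero _ hq.ne'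
  have hcw : c * w₀ = -1 := by rw [hw_def]; field_simp
  set A : ℕ → ℝ := fun k => bq q (2 * n) k * q ^ (k ^ 2) with hA_def
  have step1 : ∀ w : ℝ, (1 + w * c) *
      (∏ j ∈ (range (2 * n)).erase (n - 1), (1 + w * q ^ (2 * j + 1)))
      = ∑ k ∈ range (2 * n + 1), A k * w ^ k := by
    intro w
    have hmem : n - 1 ∈ range (2 * n) := Finset.mem_range.2 (by omega)
    have h2 : (1 + w * q ^ (2 * (n - 1) + 1)) *
        ∏ x ∈ (range (2 * n)).erase (n - 1), (1 + w * q ^ (2 * x + 1)) =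
        ∏ x ∈ range (2 * n), (1 + w * q ^ (2 * x + 1)) :=
      Finset.mul_prod_erase (range (2 * n)) (fun j => (1 + w * q ^ (2 * j + 1))) hmem
    have he : 2 * (n - 1) + 1 = 2 * n - 1 := by omega
    rw [he, ← hc_def] at h2
    rw [h2, gauss hq hq1]
  have step2 : ∑ k ∈ range (2 * n + 1), A k * w₀ ^ k = 0 := by
    have h := R_root hq hq1 n hn
    rw [hw_def, hc_def]
    exact h
  have step3 : ∀ w : ℝ, ∑ k ∈ range (2 * n + 1), A k * w ^ k
      = (w - w₀) * ∑ k ∈ range (2 * n + 1), A k * ∑ i ∈ range k, w ^ i * w₀ ^ (k - 1 - i) := by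
    intro w
    have h0 : ∑ k ∈ range (2 * n + 1), A k * w ^ k
        = ∑ k ∈ range (2 * n + 1), (A k * w ^ k - A k * w₀ ^ k) := by
      rw [Finset.sum_sub_distrib, step2]; ring
    rw [h0, Finset.mul_sum]
    apply Finset.sum_congr rfl
    intro k hk
    have hgeom := geom_sum₂_mul w w₀ k
    linear_combination (-(A k)) * hgeom
  have step4 : ∀ w : ℝ, w ≠ w₀ →
      c * ∏ j ∈ (range (2 * n)).erase (n - 1), (1 + w * q ^ (2 * j + 1))
      = ∑ k ∈ range (2 * n + 1), A k * ∑ i ∈ range k, w ^ i * w₀ ^ (k - 1 - i) := by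
    intro w hw
    have h1 : (1 + w * c) = c * (w - w₀) := by linear_combination hcw
    have h2 := step1 w
    rw [h1, step3] at h2
    have hsub : w - w₀ ≠ 0 := sub_ne_zero.2 hw
    have h3 : (w - w₀) * (c * ∏ j ∈ (range (2 * n)).erase (n - 1), (1 + w * q ^ (2 * j + 1)))
        = (w - w₀) * ∑ k ∈ range (2 * n + 1), A k * ∑ i ∈ range k, w ^ i * w₀ ^ (k - 1 - i) := by
      linear_combination h2
    exact mul_left_cancel₀ hsub h3
  have step5 : c * ∏ j ∈ (range (2 * n)).erase (n - 1), (1 + w₀ * q ^ (2 * j + 1))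
      = ∑ k ∈ range (2 * n + 1), A k * ∑ i ∈ range k, w₀ ^ i * w₀ ^ (k - 1 - i) := by
    have contH : Continuous fun w : ℝ =>
        c * ∏ j ∈ (range (2 * n)).erase (n - 1), (1 + w * q ^ (2 * j + 1)) := by
      apply Continuous.mul continuous_const
      apply continuous_finset_prod
      intro j _
      exact continuous_const.add (continuous_id.mul continuous_const)
    have contQ : Continuous fun w : ℝ =>
        ∑ k ∈ range (2 * n + 1), A k * ∑ i ∈ range k, w ^ i * w₀ ^ (k - 1 - i) := by
      apply continuous_finset_sum
      intro k _
      apply Continuous.mul continuous_const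
      apply continuous_finset_sum
      intro i _
      exact (continuous_pow i).mul continuous_const
    have heq : Set.EqOn (fun w : ℝ =>
        c * ∏ j ∈ (range (2 * n)).erase (n - 1), (1 + w * q ^ (2 * j + 1)))
        (fun w : ℝ => ∑ k ∈ range (2 * n + 1), A k * ∑ i ∈ range k, w ^ i * w₀ ^ (k - 1 - i))
        {w₀}ᶜ := fun w hw => step4 w hw
    exact congrFun (Continuous.ext_on (dense_compl_singleton w₀) contH contQ heq) w₀
  have step6 : ∑ k ∈ range (2 * n + 1), A k * ∑ i ∈ range k, w₀ ^ i * w₀ ^ (k - 1 - i)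
      = ∑ k ∈ range (2 * n + 1), A k * k * w₀ ^ (k - 1) := by
    apply Finset.sum_congr rfl
    intro k hk
    have hin : ∑ i ∈ range k, w₀ ^ i * w₀ ^ (k - 1 - i) = k * w₀ ^ (k - 1) := by
      rw [Finset.sum_congr rfl (g := fun i => w₀ ^ (k - 1)) ?_]
      · rw [Finset.sum_const, Finset.card_range, nsmul_eq_mul]
      · intro i hi
        simp only [Finset.mem_range] at hi
        rw [← pow_add]
        congr 1
        omega
    rw [hin]
    ring
  rw [← step6, ← step5]

lemma sum_odds (m : ℕ) : ∑ j ∈ range m, (2 * j + 1) = m ^ 2 := by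
  induction m with
  | zero => simp
  | succ m ih => rw [Finset.sum_range_succ, ih]; ring

lemma eJ_s {n k : ℕ} (hn : 1 ≤ n) : n + eJ n k + (2 * n - 1) * k = k ^ 2 + n * n := by
  unfold eJ
  rcases le_or_gt n k with h | h
  · rw [show n - k = 0 by omega]
    simp only [zero_mul, Nat.zero_mul]
    zify [h, hn, show 1 ≤ 2 * n by omega]
    ring
  · rw [show k - n = 0 by omega]
    simp only [zero_mul, Nat.zero_mul]
    zify [h.le, hn, show 1 ≤ 2 * n by omega, show 1 ≤ n - k by omega]
    ring

lemma eJ_t {n k : ℕ} (hn : 1 ≤ n) (hk : 1 ≤ k) :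
    (n - 1) ^ 2 + (2 * n - 1) + eJ n k + (2 * n - 1) * (k - 1) = k ^ 2 + (2 * n - 1) * (n - 1) := by
  unfold eJ
  rcases le_or_gt n k with h | h
  · rw [show n - k = 0 by omega]
    simp only [zero_mul, Nat.zero_mul]
    zify [h, hn, hk, show 1 ≤ 2 * n by omega]
    ring
  · rw [show k - n = 0 by omega]
    simp only [zero_mul, Nat.zero_mul]
    zify [h.le, hn, hk, show 1 ≤ 2 * n by omega, show 1 ≤ n - k by omega]
    ring

lemma H_eval (n : ℕ) (hn : 1 ≤ n) :
    ∏ j ∈ (range (2 * n)).erase (n - 1), (1 + (-(q ^ (2 * n - 1))⁻¹) * q ^ (2 * j + 1))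
      = (-1) ^ (n - 1) * q ^ ((n - 1) ^ 2) / q ^ ((2 * n - 1) * (n - 1)) *
          (Dq q (n - 1) * Dq q n) := by
  have hq0 : (q : ℝ) ≠ 0 := hq.ne'
  have hc : q ^ (2 * n - 1) ≠ 0 := pow_ne_zero _ hq0
  have hset : (range (2 * n)).erase (n - 1) = range (n - 1) ∪ Finset.Ico n (2 * n) := by
    ext j
    simp only [Finset.mem_erase, Finset.mem_range, Finset.mem_union, Finset.mem_Ico]
    omega
  have hdisj : Disjoint (range (n - 1)) (Finset.Ico n (2 * n)) := by
    rw [Finset.disjoint_left]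
    intro j hj hj2
    simp only [Finset.mem_range] at hj
    simp only [Finset.mem_Ico] at hj2
    omega
  rw [hset, Finset.prod_union hdisj]
  have hIco : ∏ j ∈ Finset.Ico n (2 * n), (1 + (-(q ^ (2 * n - 1))⁻¹) * q ^ (2 * j + 1))
      = Dq q n := by
    rw [Finset.prod_Ico_eq_prod_range, show 2 * n - n = n by omega, Dq]
    apply Finset.prod_congr rfl
    intro j hj
    have hsplit : q ^ (2 * (n + j) + 1) = q ^ (2 * n - 1) * q ^ (2 * (j + 1)) := by
      rw [← pow_add]; congr 1; omega
    rw [hsplit, neg_mul, ← mul_assoc, inv_mul_cancel₀ hc]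
    ring
  have hrange : ∏ j ∈ range (n - 1), (1 + (-(q ^ (2 * n - 1))⁻¹) * q ^ (2 * j + 1))
      = (-1) ^ (n - 1) * q ^ ((n - 1) ^ 2) / q ^ ((2 * n - 1) * (n - 1)) * Dq q (n - 1) := by
    have hper : ∀ j ∈ range (n - 1), (1 + (-(q ^ (2 * n - 1))⁻¹) * q ^ (2 * j + 1))
        = (-1) * (1 - q ^ (2 * (n - 1 - j))) * q ^ (2 * j + 1) / q ^ (2 * n - 1) := by
      intro j hj
      simp only [Finset.mem_range] at hj
      have hsplit : q ^ (2 * (n - 1 - j)) * q ^ (2 * j + 1) = q ^ (2 * n - 1) := by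
        rw [← pow_add]; congr 1; omega
      field_simp
      linear_combination -hsplit
    rw [Finset.prod_congr rfl hper]
    rw [Finset.prod_div_distrib, Finset.prod_const]
    rw [show (fun j => (-1 : ℝ) * (1 - q ^ (2 * (n - 1 - j))) * q ^ (2 * j + 1))
        = fun j => ((-1 : ℝ) * (1 - q ^ (2 * (n - 1 - j)))) * q ^ (2 * j + 1) from rfl]
    rw [Finset.prod_mul_distrib, Finset.prod_mul_distrib, Finset.prod_const]
    have h1 : ∏ j ∈ range (n - 1), (1 - q ^ (2 * (n - 1 - j))) = Dq q (n - 1) := by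
      rw [Dq, ← Finset.prod_range_reflect (fun j => 1 - q ^ (2 * (j + 1))) (n - 1)]
      apply Finset.prod_congr rfl
      intro j hj
      simp only [Finset.mem_range] at hj
      congr 2
      omega
    have h2 : ∏ j ∈ range (n - 1), q ^ (2 * j + 1) = q ^ ((n - 1) ^ 2) := by
      rw [Finset.prod_pow_eq_pow_sum, sum_odds hq hq1]
    rw [h1, h2, ← pow_mul, Finset.card_range]
    ring
  rw [hIco, hrange]
  ring


lemma sum_s (n : ℕ) (hn : 1 ≤ n) :
    ∑ k ∈ range (2 * n + 1), (-1 : ℝ) ^ (k + n) * bq q (2 * n) k * q ^ (eJ n k) = 0 := by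
  have hq0 : (q : ℝ) ≠ 0 := hq.ne'
  have hY : ((-1 : ℝ) ^ n * q ^ n / q ^ (n * n)) ≠ 0 := by
    apply div_ne_zero (mul_ne_zero (pow_ne_zero _ (by norm_num)) (pow_ne_zero _ hq0))
      (pow_ne_zero _ hq0)
  have hper : ∀ k ∈ range (2 * n + 1),
      bq q (2 * n) k * q ^ (k ^ 2) * (-(q ^ (2 * n - 1))⁻¹) ^ k
        = ((-1 : ℝ) ^ n * q ^ n / q ^ (n * n)) *
          ((-1 : ℝ) ^ (k + n) * bq q (2 * n) k * q ^ (eJ n k)) := by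
    intro k hk
    have h1 : (-(q ^ (2 * n - 1))⁻¹) ^ k = (-1 : ℝ) ^ k * (q ^ ((2 * n - 1) * k))⁻¹ := by
      rw [neg_pow, inv_pow, ← pow_mul]
    have hsgn : (-1 : ℝ) ^ n * (-1 : ℝ) ^ (k + n) = (-1 : ℝ) ^ k := by
      rw [← pow_add, show n + (k + n) = k + 2 * n by ring, pow_add, pow_mul]
      norm_num
    have hexp : q ^ (n : ℕ) * q ^ (eJ n k) * q ^ ((2 * n - 1) * k) = q ^ (k ^ 2) * q ^ (n * n) := by
      rw [← pow_add, ← pow_add, ← pow_add, eJ_s hq hq1 hn]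
    rw [h1]
    rw [div_mul_eq_mul_div, eq_div_iff (pow_ne_zero _ hq0)]
    field_simp
    have hone : (-1 : ℝ) ^ (n * 2) = 1 := by rw [mul_comm n 2, pow_mul]; norm_num
    linear_combination bq q (2 * n) k * (-1 : ℝ) ^ k * hexp
      + bq q (2 * n) k * q ^ (eJ n k) * q ^ ((2 * n - 1) * k) * q ^ (n : ℕ) * hsgn
      + (-2 : ℝ) * (-1 : ℝ) ^ k * bq q (2 * n) k * hexp
      + (-2 : ℝ) * (-1 : ℝ) ^ k * bq q (2 * n) k *
          (q ^ ((2 * n - 1) * k) * q ^ (n : ℕ) * q ^ (eJ n k)) * hone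
  have h0 := R_root hq hq1 n hn
  rw [Finset.sum_congr rfl hper, ← Finset.mul_sum] at h0
  rcases mul_eq_zero.mp h0 with h | h
  · exact absurd h hY
  · exact h

lemma sum_t (n : ℕ) (hn : 1 ≤ n) :
    ∑ k ∈ range (2 * n + 1), (-1 : ℝ) ^ (k + n) * k * bq q (2 * n) k * q ^ (eJ n k)
      = Dq q n * Dq q (n - 1) := by
  have hq0 : (q : ℝ) ≠ 0 := hq.ne'
  have hZdef : (0:ℝ) = 0 := rfl
  have hZ : ((-1 : ℝ) ^ (n - 1) * q ^ ((n - 1) ^ 2) * q ^ (2 * n - 1) / q ^ ((2 * n - 1) * (n - 1))) ≠ 0 := by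
    apply div_ne_zero
    · exact mul_ne_zero (mul_ne_zero (pow_ne_zero _ (by norm_num)) (pow_ne_zero _ hq0))
        (pow_ne_zero _ hq0)
    · exact pow_ne_zero _ hq0
  have hper : ∀ k ∈ range (2 * n + 1),
      bq q (2 * n) k * q ^ (k ^ 2) * k * (-(q ^ (2 * n - 1))⁻¹) ^ (k - 1)
        = ((-1 : ℝ) ^ (n - 1) * q ^ ((n - 1) ^ 2) * q ^ (2 * n - 1) / q ^ ((2 * n - 1) * (n - 1))) *
          ((-1 : ℝ) ^ (k + n) * k * bq q (2 * n) k * q ^ (eJ n k)) := by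
    intro k hk
    rcases Nat.eq_zero_or_pos k with rfl | hk1
    · simp
    have h1 : (-(q ^ (2 * n - 1))⁻¹) ^ (k - 1) = (-1 : ℝ) ^ (k - 1) * (q ^ ((2 * n - 1) * (k - 1)))⁻¹ := by
      rw [neg_pow, inv_pow, ← pow_mul]
    have hsgn : (-1 : ℝ) ^ (n - 1) * (-1 : ℝ) ^ (k + n) = (-1 : ℝ) ^ (k - 1) := by
      rw [← pow_add, show n - 1 + (k + n) = k - 1 + 2 * n by omega, pow_add, pow_mul]
      norm_num
    have hexp : q ^ ((n - 1) ^ 2) * q ^ (2 * n - 1) * q ^ (eJ n k) * q ^ ((2 * n - 1) * (k - 1))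
        = q ^ (k ^ 2) * q ^ ((2 * n - 1) * (n - 1)) := by
      rw [← pow_add, ← pow_add, ← pow_add, ← pow_add, eJ_t hq hq1 hn hk1]
    rw [h1]
    rw [div_mul_eq_mul_div, eq_div_iff (pow_ne_zero _ hq0)]
    field_simp
    have hsgnk : (-1 : ℝ) ^ k = (-1 : ℝ) ^ (k - 1) * (-1) := by
      rw [← pow_succ]; congr 1; omega
    have hsgn2 : (-1 : ℝ) ^ (n - 1) * (-1 : ℝ) ^ n = -1 := by
      rw [← pow_add]
      exact Odd.neg_one_pow ⟨n - 1, by omega⟩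
    linear_combination bq q (2 * n) k * (-1 : ℝ) ^ (k - 1) * (k : ℝ) * hexp
      + bq q (2 * n) k * q ^ (eJ n k) * q ^ ((2 * n - 1) * (k - 1)) * q ^ ((n - 1) ^ 2)
          * q ^ (2 * n - 1) * (k : ℝ) * hsgn
      + (-2 : ℝ) * (k : ℝ) * bq q (2 * n) k * (-1 : ℝ) ^ (k - 1) * hexp
      + (-2 : ℝ) * (k : ℝ) * bq q (2 * n) k *
          (q ^ ((2 * n - 1) * (k - 1)) * q ^ (2 * n - 1) * q ^ ((n - 1) ^ 2) * q ^ (eJ n k)) *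
          ((-1 : ℝ) ^ (n - 1) * (-1 : ℝ) ^ n) * hsgnk
      + (2 : ℝ) * (k : ℝ) * bq q (2 * n) k *
          (q ^ ((2 * n - 1) * (k - 1)) * q ^ (2 * n - 1) * q ^ ((n - 1) ^ 2) * q ^ (eJ n k)) *
          (-1 : ℝ) ^ (k - 1) * hsgn2
      + ((k : ℝ) - 1) * bq q (2 * n) k * (-1 : ℝ) ^ k * ((-1 : ℝ) ^ (n - 1) * (-1 : ℝ) ^ n) * hexp
      + ((k : ℝ) - 1) * bq q (2 * n) k * q ^ (k ^ 2) * q ^ ((2 * n - 1) * (n - 1)) *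
          (((-1 : ℝ) ^ (n - 1) * (-1 : ℝ) ^ n) * hsgnk + (-1 : ℝ) ^ (k - 1) * (-1) * hsgn2)
  have h0 := R_deriv hq hq1 n hn
  rw [H_eval hq hq1 n hn] at h0
  rw [Finset.sum_congr rfl hper, ← Finset.mul_sum] at h0
  have h2 : ((-1 : ℝ) ^ (n - 1) * q ^ ((n - 1) ^ 2) * q ^ (2 * n - 1) / q ^ ((2 * n - 1) * (n - 1))) *
      ∑ k ∈ range (2 * n + 1), (-1 : ℝ) ^ (k + n) * k * bq q (2 * n) k * q ^ (eJ n k)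
      = ((-1 : ℝ) ^ (n - 1) * q ^ ((n - 1) ^ 2) * q ^ (2 * n - 1) / q ^ ((2 * n - 1) * (n - 1))) *
      (Dq q n * Dq q (n - 1)) := by
    rw [h0]
    ring
  exact mul_left_cancel₀ hZ h2


lemma finId (n : ℕ) (hn : 1 ≤ n) :
    Dq q n * Dq q (n - 1)
      = (∑ m ∈ range n, (-1 : ℝ) ^ m * q ^ (m * (m + 1)) *
          (m * bq q (2 * n) (n + m) + (m + 1) * bq q (2 * n) (n - 1 - m)))
        + (-1 : ℝ) ^ n * n * q ^ (n * (n + 1)) := by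
  have ht := sum_t hq hq1 n hn
  have hs := sum_s hq hq1 n hn
  -- combined sum with coefficient ((k:ℝ) - n)
  have hv : ∑ k ∈ range (2 * n + 1),
      (-1 : ℝ) ^ (k + n) * ((k : ℝ) - n) * bq q (2 * n) k * q ^ (eJ n k)
      = Dq q n * Dq q (n - 1) := by
    have expand : ∀ k ∈ range (2 * n + 1),
        (-1 : ℝ) ^ (k + n) * ((k : ℝ) - n) * bq q (2 * n) k * q ^ (eJ n k)
        = (-1 : ℝ) ^ (k + n) * k * bq q (2 * n) k * q ^ (eJ n k)
          - (n : ℝ) * ((-1 : ℝ) ^ (k + n) * bq q (2 * n) k * q ^ (eJ n k)) := by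
      intro k hk; ring
    rw [Finset.sum_congr rfl expand, Finset.sum_sub_distrib, ← Finset.mul_sum, ht, hs]
    ring
  set v : ℕ → ℝ := fun k =>
    (-1 : ℝ) ^ (k + n) * ((k : ℝ) - n) * bq q (2 * n) k * q ^ (eJ n k) with hv_def
  have hsplit : ∑ k ∈ range (2 * n + 1), v k
      = ((∑ k ∈ range n, v k) + (∑ i ∈ range n, v (n + i))) + v (n + n) := by
    rw [show 2 * n + 1 = n + (n + 1) by ring, Finset.sum_range_add, Finset.sum_range_succ]
    ring
  have hrefl : ∑ k ∈ range n, v k = ∑ m ∈ range n, v (n - 1 - m) := by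
    rw [Finset.sum_range_reflect]
  have hlast : v (n + n) = (-1 : ℝ) ^ n * n * q ^ (n * (n + 1)) := by
    have hb : bq q (2 * n) (n + n) = 1 := by
      rw [show n + n = 2 * n by ring, bq_self hq hq1]
    have he : eJ n (n + n) = n * (n + 1) := by
      unfold eJ
      rw [show n + n - n = n by omega, show n - (n + n) = 0 by omega]
      simp
    have hsg : (-1 : ℝ) ^ (n + n + n) = (-1 : ℝ) ^ n := by
      rw [show n + n + n = n + 2 * n by ring, pow_add, pow_mul]; norm_num
    rw [hv_def]
    simp only []
    rw [hb, he, hsg]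
    push_cast
    ring
  have hpair : ∀ m ∈ range n, v (n - 1 - m) + v (n + m)
      = (-1 : ℝ) ^ m * q ^ (m * (m + 1)) *
        (m * bq q (2 * n) (n + m) + (m + 1) * bq q (2 * n) (n - 1 - m)) := by
    intro m hm
    simp only [Finset.mem_range] at hm
    rw [hv_def]
    simp only []
    have e1 : eJ n (n + m) = m * (m + 1) := by
      unfold eJ
      rw [show n + m - n = m by omega, show n - (n + m) = 0 by omega]
      simp
    have e2 : eJ n (n - 1 - m) = m * (m + 1) := by
      unfold eJ
      rw [show n - 1 - m - n = 0 by omega, show n - (n - 1 - m) = m + 1 by omega]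
      simp [Nat.add_sub_cancel]
      ring
    have s1 : (-1 : ℝ) ^ (n + m + n) = (-1 : ℝ) ^ m := by
      rw [show n + m + n = m + 2 * n by ring, pow_add, pow_mul]; norm_num
    have s2 : (-1 : ℝ) ^ (n - 1 - m + n) = (-1 : ℝ) ^ (m + 1) := by
      rw [show n - 1 - m + n = (m + 1) + 2 * (n - 1 - m) by omega, pow_add, pow_mul]
      norm_num
    have c1 : ((n + m : ℕ) : ℝ) - n = m := by push_cast; ring
    have c2 : ((n - 1 - m : ℕ) : ℝ) - n = -((m : ℝ) + 1) := by
      rw [show n - 1 - m = n - (m + 1) by omega, Nat.cast_sub (by omega)]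
      push_cast
      ring
    rw [e1, e2, s1, s2, c1, c2, pow_succ]
    ring
  rw [hsplit, hrefl, hlast, ← Finset.sum_add_distrib, Finset.sum_congr rfl hpair] at hv
  exact hv.symm


/-! ### Limits -/

lemma one_sub_sum_le_prod_one_sub (s : Finset ℕ) (f : ℕ → ℝ) (h0 : ∀ i ∈ s, 0 ≤ f i)
    (h1 : ∀ i ∈ s, f i ≤ 1) : 1 - ∑ i ∈ s, f i ≤ ∏ i ∈ s, (1 - f i) := by
  classical
  induction s using Finset.induction_on with
  | empty => simp
  | @insert a s ha ih =>
    rw [Finset.prod_insert ha, Finset.sum_insert ha]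
    have ih' := ih (fun i hi => h0 i (Finset.mem_insert_of_mem hi))
      (fun i hi => h1 i (Finset.mem_insert_of_mem hi))
    have ha0 : 0 ≤ f a := h0 a (Finset.mem_insert_self a s)
    have ha1 : f a ≤ 1 := h1 a (Finset.mem_insert_self a s)
    have hsum0 : 0 ≤ ∑ i ∈ s, f i :=
      Finset.sum_nonneg fun i hi => h0 i (Finset.mem_insert_of_mem hi)
    nlinarith

/-- Partial products of a `[0,1]`-valued sequence converging to `L` give `HasProd`. -/
lemma hasProd_of_tendsto (f : ℕ → ℝ) (h0 : ∀ i, 0 ≤ f i) (h1 : ∀ i, f i ≤ 1) {L : ℝ}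
    (hL : Tendsto (fun n => ∏ i ∈ range n, f i) atTop (𝓝 L)) : HasProd f L := by
  classical
  have hPnn : ∀ n, 0 ≤ ∏ i ∈ range n, f i := fun n => Finset.prod_nonneg fun i _ => h0 i
  have hmono : Antitone fun n => ∏ i ∈ range n, f i := by
    apply antitone_nat_of_succ_le
    intro n
    rw [Finset.prod_range_succ]
    nlinarith [hPnn n, h0 n, h1 n]
  have hLle : ∀ n, L ≤ ∏ i ∈ range n, f i := fun n =>
    le_of_tendsto hL (Filter.eventually_atTop.2 ⟨n, fun m hm => hmono hm⟩)
  have hsub : ∀ s : Finset ℕ, ∀ n, s ⊆ range n → ∏ i ∈ range n, f i ≤ ∏ i ∈ s, f i := by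
    intro s n hs
    rw [← Finset.prod_sdiff hs]
    have h2 : ∏ i ∈ range n \ s, f i ≤ 1 :=
      Finset.prod_le_one (fun i _ => h0 i) (fun i _ => h1 i)
    nlinarith [Finset.prod_nonneg (fun i (_ : i ∈ s) => h0 i),
      Finset.prod_nonneg (fun i (_ : i ∈ range n \ s) => h0 i)]
  rw [HasProd, Metric.tendsto_nhds]
  intro ε hε
  obtain ⟨N, hN⟩ := (Metric.tendsto_atTop.1 hL) ε hε
  change ∀ᶠ x in (atTop : Filter (Finset ℕ)), dist (∏ b ∈ x, f b) L < ε
  rw [Filter.eventually_atTop]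
  refine ⟨range N, fun s hs => ?_⟩
  have hup : ∏ i ∈ s, f i ≤ ∏ i ∈ range N, f i := by
    rw [← Finset.prod_sdiff hs]
    have h2 : ∏ i ∈ s \ range N, f i ≤ 1 :=
      Finset.prod_le_one (fun i _ => h0 i) (fun i _ => h1 i)
    nlinarith [Finset.prod_nonneg (fun i (_ : i ∈ range N) => h0 i),
      Finset.prod_nonneg (fun i (_ : i ∈ s \ range N) => h0 i)]
  have hlow : L ≤ ∏ i ∈ s, f i := by
    obtain ⟨M, hM⟩ := s.exists_nat_subset_range
    exact (hLle M).trans (hsub s M hM)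
  have hNd := hN N le_rfl
  rw [Real.dist_eq] at hNd ⊢
  rw [abs_lt] at hNd ⊢
  constructor <;> nlinarith [hNd.1, hNd.2]

/-- The limit of the partial products. -/
noncomputable def Einf (q : ℝ) : ℝ := ⨅ n, Dq q n

lemma Dq_bddBelow : BddBelow (Set.range (Dq q)) := by
  refine ⟨0, fun x hx => ?_⟩
  obtain ⟨n, rfl⟩ := hx
  exact (Dq_pos hq hq1 n).le

lemma Dq_tendsto : Tendsto (Dq q) atTop (𝓝 (Einf q)) :=
  tendsto_atTop_ciInf (Dq_antitone hq hq1) (Dq_bddBelow hq hq1)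

lemma Einf_le (k : ℕ) : Einf q ≤ Dq q k := ciInf_le (Dq_bddBelow hq hq1) k

lemma geom_tail_le (N n : ℕ) :
    ∑ j ∈ Finset.Ico N n, q ^ (2 * (j + 1)) ≤ q ^ (2 * (N + 1)) / (1 - q ^ 2) := by
  have hq2 : q ^ 2 < 1 := by nlinarith
  have hq2' : (0:ℝ) < 1 - q ^ 2 := by nlinarith
  rcases le_or_gt N n with h | h
  · rw [Finset.sum_Ico_eq_sum_range]
    have heq : ∀ i, q ^ (2 * (N + i + 1)) = q ^ (2 * (N + 1)) * (q ^ 2) ^ i := by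
      intro i
      rw [← pow_mul, ← pow_add]
      congr 1
      ring
    rw [Finset.sum_congr rfl fun i _ => heq i, ← Finset.mul_sum]
    rw [div_eq_mul_inv]
    apply mul_le_mul_of_nonneg_left _ (by positivity)
    calc ∑ i ∈ range (n - N), (q ^ 2) ^ i
        ≤ ∑' i : ℕ, (q ^ 2) ^ i :=
          Summable.sum_le_tsum _ (fun i _ => by positivity)
            (summable_geometric_of_lt_one (by positivity) hq2)
      _ = (1 - q ^ 2)⁻¹ := tsum_geometric_of_lt_one (by positivity) hq2
  · rw [Finset.Ico_eq_empty (by omega)]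
    simp
    positivity

lemma Einf_pos : 0 < Einf q := by
  have hq2 : q ^ 2 < 1 := by nlinarith
  have hq2' : (0:ℝ) < 1 - q ^ 2 := by nlinarith
  obtain ⟨N, hN⟩ : ∃ N : ℕ, q ^ (2 * (N + 1)) / (1 - q ^ 2) < 1 / 2 := by
    have h := tendsto_pow_atTop_nhds_zero_of_lt_one (by positivity : (0:ℝ) ≤ q ^ 2) hq2
    have h2 : Tendsto (fun n : ℕ => (q ^ 2) ^ (n + 1) / (1 - q ^ 2)) atTop (𝓝 (0 / (1 - q^2))) :=
      (h.comp (tendsto_add_atTop_nat 1)).div_const _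
    rw [zero_div] at h2
    obtain ⟨N, hN⟩ := (h2.eventually (eventually_lt_nhds (by norm_num : (0:ℝ) < 1/2))).exists
    refine ⟨N, ?_⟩
    rw [show 2 * (N + 1) = (N + 1) * 2 by ring, pow_mul, pow_right_comm]
    exact hN
  have key : ∀ n, N ≤ n → Dq q N / 2 ≤ Dq q n := by
    intro n hn
    have hDsplit : Dq q N * ∏ j ∈ Finset.Ico N n, (1 - q ^ (2 * (j + 1))) = Dq q n :=
      Finset.prod_range_mul_prod_Ico _ hn
    have htail : 1 / 2 ≤ ∏ j ∈ Finset.Ico N n, (1 - q ^ (2 * (j + 1))) := by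
      have hb := one_sub_sum_le_prod_one_sub hq hq1 (Finset.Ico N n) (fun j => q ^ (2 * (j + 1)))
        (fun j _ => by positivity)
        (fun j _ => pow_le_one₀ hq.le hq1.le)
      have hsum := geom_tail_le hq hq1 N n
      linarith
    nlinarith [Dq_pos hq hq1 N, Dq_pos hq hq1 n]
  have hE : Dq q N / 2 ≤ Einf q := by
    apply ge_of_tendsto (Dq_tendsto hq hq1)
    exact Filter.eventually_atTop.2 ⟨N, key⟩
  have := Dq_pos hq hq1 N
  linarith

lemma bq_nonneg {n k : ℕ} (hk : k ≤ 2 * n) : 0 ≤ bq q (2 * n) k :=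
  div_nonneg (Nq_nonneg hq hq1 (by omega)) (Dq_pos hq hq1 k).le

lemma bq_le_inv {n k : ℕ} (hk : k ≤ 2 * n) : bq q (2 * n) k ≤ (Einf q)⁻¹ := by
  have hD := Dq_pos hq hq1 k
  have hE := Einf_pos hq hq1
  calc bq q (2 * n) k ≤ 1 / Dq q k := by
        rw [bq, div_le_div_iff₀ hD hD]
        have := Nq_le_one hq hq1 (n := 2 * n) (k := k) hk
        nlinarith
    _ ≤ 1 / Einf q := one_div_le_one_div_of_le hE (Einf_le hq hq1 k)
    _ = (Einf q)⁻¹ := one_div _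

lemma Nq_lower {n k : ℕ} (hk : k ≤ 2 * n) :
    1 - q ^ (2 * (2 * n - k)) * (q ^ 2 / (1 - q ^ 2)) ≤ Nq q (2 * n) k := by
  have hq2' : (0:ℝ) < 1 - q ^ 2 := by nlinarith
  have hb := one_sub_sum_le_prod_one_sub hq hq1 (range k)
      (fun j => q ^ (2 * (2 * n - k) + 2 * (j + 1)))
      (fun j _ => by positivity)
      (fun j _ => pow_le_one₀ hq.le hq1.le)
  have hN : Nq q (2 * n) k = ∏ j ∈ range k, (1 - q ^ (2 * (2 * n - k) + 2 * (j + 1))) := by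
    rw [Nq]
    apply Finset.prod_congr rfl
    intro j hj
    simp only [Finset.mem_range] at hj
    congr 2
    omega
  have hsum : ∑ j ∈ range k, q ^ (2 * (2 * n - k) + 2 * (j + 1))
      ≤ q ^ (2 * (2 * n - k)) * (q ^ 2 / (1 - q ^ 2)) := by
    have heq : ∀ j, q ^ (2 * (2 * n - k) + 2 * (j + 1))
        = q ^ (2 * (2 * n - k)) * q ^ (2 * (j + 1)) := fun j => pow_add q _ _
    rw [Finset.sum_congr rfl fun j _ => heq j, ← Finset.mul_sum]
    apply mul_le_mul_of_nonneg_left _ (by positivity)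
    have := geom_tail_le hq hq1 0 k
    rw [Finset.range_eq_Ico]
    calc ∑ j ∈ Finset.Ico 0 k, q ^ (2 * (j + 1)) ≤ q ^ (2 * (0 + 1)) / (1 - q ^ 2) := this
      _ = q ^ 2 / (1 - q ^ 2) := by norm_num
  rw [hN]
  linarith

lemma bq_tendsto_upper (m : ℕ) :
    Tendsto (fun n => bq q (2 * n) (n + m)) atTop (𝓝 (Einf q)⁻¹) := by
  have hq2 : q ^ 2 < 1 := by nlinarith
  have hE := Einf_pos hq hq1
  have hNt : Tendsto (fun n => Nq q (2 * n) (n + m)) atTop (𝓝 1) := by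
    have hlow : Tendsto (fun n => 1 - (q ^ 2) ^ (n - m) * (q ^ 2 / (1 - q ^ 2))) atTop
        (𝓝 (1 - 0 * (q ^ 2 / (1 - q ^ 2)))) := by
      apply tendsto_const_nhds.sub
      exact (((tendsto_pow_atTop_nhds_zero_of_lt_one (by positivity) hq2).comp
        (tendsto_sub_atTop_nat m)).mul_const _)
    rw [show (1:ℝ) - 0 * (q ^ 2 / (1 - q ^ 2)) = 1 by ring] at hlow
    apply tendsto_of_tendsto_of_tendsto_of_le_of_le' hlow tendsto_const_nhds
    · filter_upwards [Filter.eventually_atTop.2 ⟨m, fun n hn => hn⟩] with n hn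
      have h1 := Nq_lower hq hq1 (n := n) (k := n + m) (by omega)
      have he : 2 * (2 * n - (n + m)) = (n - m) * 2 := by omega
      rw [he, pow_mul, pow_right_comm] at h1
      exact h1
    · filter_upwards [Filter.eventually_atTop.2 ⟨m, fun n hn => hn⟩] with n hn
      exact Nq_le_one hq hq1 (by omega)
  have hDt : Tendsto (fun n => Dq q (n + m)) atTop (𝓝 (Einf q)) :=
    (Dq_tendsto hq hq1).comp (tendsto_add_atTop_nat m)
  have := hNt.div hDt hE.ne'
  rw [show (1:ℝ) / Einf q = (Einf q)⁻¹ from one_div _] at this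
  exact this

lemma bq_tendsto_lower (m : ℕ) :
    Tendsto (fun n => bq q (2 * n) (n - 1 - m)) atTop (𝓝 (Einf q)⁻¹) := by
  have hq2 : q ^ 2 < 1 := by nlinarith
  have hE := Einf_pos hq hq1
  have hNt : Tendsto (fun n => Nq q (2 * n) (n - 1 - m)) atTop (𝓝 1) := by
    have hlow : Tendsto (fun n => 1 - (q ^ 2) ^ (n + (m + 1)) * (q ^ 2 / (1 - q ^ 2))) atTop
        (𝓝 (1 - 0 * (q ^ 2 / (1 - q ^ 2)))) := by
      apply tendsto_const_nhds.sub
      exact (((tendsto_pow_atTop_nhds_zero_of_lt_one (by positivity) hq2).comp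
        (tendsto_add_atTop_nat (m + 1))).mul_const _)
    rw [show (1:ℝ) - 0 * (q ^ 2 / (1 - q ^ 2)) = 1 by ring] at hlow
    apply tendsto_of_tendsto_of_tendsto_of_le_of_le' hlow tendsto_const_nhds
    · filter_upwards [Filter.eventually_atTop.2 ⟨m + 1, fun n hn => hn⟩] with n hn
      have h1 := Nq_lower hq hq1 (n := n) (k := n - 1 - m) (by omega)
      have he : 2 * (2 * n - (n - 1 - m)) = (n + (m + 1)) * 2 := by omega
      rw [he, pow_mul, pow_right_comm] at h1
      exact h1
    · filter_upwards with n
      exact Nq_le_one hq hq1 (by omega)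
  have hDt : Tendsto (fun n => Dq q (n - 1 - m)) atTop (𝓝 (Einf q)) := by
    have h := (Dq_tendsto hq hq1).comp (tendsto_sub_atTop_nat (1 + m))
    apply h.congr
    intro n
    simp only [Function.comp_apply]
    congr 1
    omega
  have := hNt.div hDt hE.ne'
  rw [show (1:ℝ) / Einf q = (Einf q)⁻¹ from one_div _] at this
  exact this


lemma main_sum :
    ∑' i : ℕ, (-1 : ℝ) ^ i * (2 * (i : ℝ) + 1) * q ^ (i * (i + 1)) = (Einf q) ^ 3 := by
  have hE := Einf_pos hq hq1
  set F : ℕ → ℕ → ℝ := fun n m => if m < n then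
    (-1 : ℝ) ^ m * q ^ (m * (m + 1)) *
      (m * bq q (2 * n) (n + m) + (m + 1) * bq q (2 * n) (n - 1 - m)) else 0 with hF_def
  set glim : ℕ → ℝ := fun m => (-1 : ℝ) ^ m * q ^ (m * (m + 1)) *
      ((m : ℝ) * (Einf q)⁻¹ + ((m : ℝ) + 1) * (Einf q)⁻¹) with hglim_def
  have h1 : Summable (fun m : ℕ => (m : ℝ) * q ^ m) := by
    have := summable_pow_mul_geometric_of_norm_lt_one (R := ℝ) 1
      (r := q) (by rw [Real.norm_eq_abs, abs_of_pos hq]; exact hq1)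
    simpa [pow_one] using this
  have h2 : Summable (fun m : ℕ => q ^ m) := summable_geometric_of_lt_one hq.le hq1
  have hsumB : Summable (fun m : ℕ => (2 * (m : ℝ) + 1) * q ^ (m * (m + 1)) * (Einf q)⁻¹) := by
    have ha : Summable (fun m : ℕ => (2 * ((m : ℝ) * q ^ m) + q ^ m) * (Einf q)⁻¹) :=
      ((h1.mul_left 2).add h2).mul_right _
    apply ha.of_nonneg_of_le (fun m => by positivity)
    intro m
    have hp : q ^ (m * (m + 1)) ≤ q ^ m :=
      pow_le_pow_of_le_one hq.le hq1.le (Nat.le_mul_of_pos_right m (by omega))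
    have h0 : (0:ℝ) ≤ 2 * (m : ℝ) + 1 := by positivity
    have hi : (0:ℝ) ≤ (Einf q)⁻¹ := by positivity
    have : (2 * (m : ℝ) + 1) * q ^ (m * (m + 1)) ≤ (2 * (m : ℝ) + 1) * q ^ m :=
      mul_le_mul_of_nonneg_left hp h0
    calc (2 * (m : ℝ) + 1) * q ^ (m * (m + 1)) * (Einf q)⁻¹
        ≤ (2 * (m : ℝ) + 1) * q ^ m * (Einf q)⁻¹ := mul_le_mul_of_nonneg_right this hi
      _ = (2 * ((m : ℝ) * q ^ m) + q ^ m) * (Einf q)⁻¹ := by ring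
  have hab : ∀ m : ℕ, Tendsto (fun n => F n m) atTop (𝓝 (glim m)) := by
    intro m
    have ht : Tendsto (fun n => (-1 : ℝ) ^ m * q ^ (m * (m + 1)) *
        ((m : ℝ) * bq q (2 * n) (n + m) + ((m : ℝ) + 1) * bq q (2 * n) (n - 1 - m))) atTop
        (𝓝 (glim m)) := by
      rw [hglim_def]
      exact tendsto_const_nhds.mul
        (((bq_tendsto_upper hq hq1 m).const_mul _).add
          ((bq_tendsto_lower hq hq1 m).const_mul _))
    apply ht.congr'
    filter_upwards [Filter.eventually_atTop.2 ⟨m + 1, fun n (hn : m + 1 ≤ n) => hn⟩] with n hn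
    rw [hF_def]
    simp only [if_pos (by omega : m < n)]
  have hbound : ∀ᶠ n in atTop, ∀ m : ℕ,
      ‖F n m‖ ≤ (2 * (m : ℝ) + 1) * q ^ (m * (m + 1)) * (Einf q)⁻¹ := by
    filter_upwards with n
    intro m
    rw [hF_def]
    simp only []
    by_cases hmn : m < n
    · rw [if_pos hmn]
      have hb1 := bq_le_inv hq hq1 (n := n) (k := n + m) (by omega)
      have hb2 := bq_le_inv hq hq1 (n := n) (k := n - 1 - m) (by omega)
      have hb3 := bq_nonneg hq hq1 (n := n) (k := n + m) (by omega)
      have hb4 := bq_nonneg hq hq1 (n := n) (k := n - 1 - m) (by omega)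
      have hinner : (0:ℝ) ≤ (m : ℝ) * bq q (2 * n) (n + m) +
          ((m : ℝ) + 1) * bq q (2 * n) (n - 1 - m) := by positivity
      rw [norm_mul, norm_mul, norm_pow, norm_neg, norm_one, one_pow, one_mul,
        Real.norm_of_nonneg (by positivity : (0:ℝ) ≤ q ^ (m * (m + 1))),
        Real.norm_of_nonneg hinner]
      have hle : (m : ℝ) * bq q (2 * n) (n + m) + ((m : ℝ) + 1) * bq q (2 * n) (n - 1 - m)
          ≤ (2 * (m : ℝ) + 1) * (Einf q)⁻¹ := by
        have e1 : (m : ℝ) * bq q (2 * n) (n + m) ≤ (m : ℝ) * (Einf q)⁻¹ :=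
          mul_le_mul_of_nonneg_left hb1 (by positivity)
        have e2 : ((m : ℝ) + 1) * bq q (2 * n) (n - 1 - m) ≤ ((m : ℝ) + 1) * (Einf q)⁻¹ :=
          mul_le_mul_of_nonneg_left hb2 (by positivity)
        linarith
      calc q ^ (m * (m + 1)) * ((m : ℝ) * bq q (2 * n) (n + m) +
            ((m : ℝ) + 1) * bq q (2 * n) (n - 1 - m))
          ≤ q ^ (m * (m + 1)) * ((2 * (m : ℝ) + 1) * (Einf q)⁻¹) :=
            mul_le_mul_of_nonneg_left hle (by positivity)
        _ = (2 * (m : ℝ) + 1) * q ^ (m * (m + 1)) * (Einf q)⁻¹ := by ring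
    · rw [if_neg hmn, norm_zero]
      positivity
  have hdom := tendsto_tsum_of_dominated_convergence hsumB hab hbound
  have hts : ∀ n : ℕ, 1 ≤ n →
      ∑' m : ℕ, F n m = Dq q n * Dq q (n - 1) - (-1 : ℝ) ^ n * n * q ^ (n * (n + 1)) := by
    intro n hn
    have h0 : ∑' m : ℕ, F n m = ∑ m ∈ range n, F n m := by
      apply tsum_eq_sum
      intro m hm
      simp only [hF_def]
      exact if_neg (fun h => hm (Finset.mem_range.2 h))
    have h1' : ∑ m ∈ range n, F n m = ∑ m ∈ range n, (-1 : ℝ) ^ m * q ^ (m * (m + 1)) *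
        (m * bq q (2 * n) (n + m) + (m + 1) * bq q (2 * n) (n - 1 - m)) := by
      apply Finset.sum_congr rfl
      intro m hm
      simp only [hF_def]
      exact if_pos (Finset.mem_range.1 hm)
    rw [h0, h1']
    have := finId hq hq1 n hn
    linarith
  have hbdry : Tendsto (fun n : ℕ => (-1 : ℝ) ^ n * n * q ^ (n * (n + 1))) atTop (𝓝 0) := by
    apply squeeze_zero_norm _ (h1.tendsto_atTop_zero)
    intro n
    rw [norm_mul, norm_mul, norm_pow, norm_neg, norm_one, one_pow, one_mul,
      Real.norm_natCast, Real.norm_of_nonneg (by positivity : (0:ℝ) ≤ q ^ (n * (n + 1)))]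
    have hp : q ^ (n * (n + 1)) ≤ q ^ n :=
      pow_le_pow_of_le_one hq.le hq1.le (Nat.le_mul_of_pos_right n (by omega))
    exact mul_le_mul_of_nonneg_left hp (by positivity)
  have hDD : Tendsto (fun n : ℕ => Dq q n * Dq q (n - 1) - (-1 : ℝ) ^ n * n * q ^ (n * (n + 1)))
      atTop (𝓝 (Einf q * Einf q - 0)) := by
    apply Tendsto.sub _ hbdry
    exact (Dq_tendsto hq hq1).mul ((Dq_tendsto hq hq1).comp (tendsto_sub_atTop_nat 1))
  have hlim2 : Tendsto (fun n => ∑' m : ℕ, F n m) atTop (𝓝 (Einf q * Einf q - 0)) := by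
    apply hDD.congr'
    filter_upwards [Filter.eventually_atTop.2 ⟨1, fun n (hn : 1 ≤ n) => hn⟩] with n hn
    exact (hts n hn).symm
  have hkey : ∑' m : ℕ, glim m = Einf q * Einf q - 0 := tendsto_nhds_unique hdom hlim2
  have hconv : ∑' m : ℕ, glim m
      = (∑' i : ℕ, (-1 : ℝ) ^ i * (2 * (i : ℝ) + 1) * q ^ (i * (i + 1))) * (Einf q)⁻¹ := by
    rw [← tsum_mul_right]
    apply tsum_congr
    intro m
    rw [hglim_def]
    ring
  rw [hconv] at hkey
  have hEne : Einf q ≠ 0 := hE.ne'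
  field_simp at hkey
  rw [hkey]
  ring

end JacobiAux

/-- Jacobi's identity: for 0 < q < 1,
`∑_{i=0}^∞ (-1)^i (2i+1) q^{i(i+1)} = ∏_{i=1}^∞ (1-q^{2i})³`, and the sum is positive. -/
theorem jacobi_identity (q : ℝ) (hq : 0 < q) (hq1 : q < 1) :
    (∑' i : ℕ, (-1 : ℝ) ^ i * (2 * (i : ℝ) + 1) * q ^ (i * (i + 1))
        = ∏' i : ℕ, (1 - q ^ (2 * (i + 1))) ^ 3) ∧
    0 < ∑' i : ℕ, (-1 : ℝ) ^ i * (2 * (i : ℝ) + 1) * q ^ (i * (i + 1)) := by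
  have hE := JacobiAux.Einf_pos hq hq1
  have hmain := JacobiAux.main_sum hq hq1
  have hcube : Tendsto (fun n => ∏ i ∈ Finset.range n, (1 - q ^ (2 * (i + 1))) ^ 3) atTop
      (𝓝 ((JacobiAux.Einf q) ^ 3)) := by
    have heq : ∀ n, ∏ i ∈ Finset.range n, (1 - q ^ (2 * (i + 1))) ^ 3 = (JacobiAux.Dq q n) ^ 3 :=
      fun n => by rw [JacobiAux.Dq, ← Finset.prod_pow]
    have := (JacobiAux.Dq_tendsto hq hq1).pow 3
    exact this.congr fun n => (heq n).symm
  have hprod : HasProd (fun i : ℕ => (1 - q ^ (2 * (i + 1))) ^ 3) ((JacobiAux.Einf q) ^ 3) := by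
    apply JacobiAux.hasProd_of_tendsto hq hq1
    · intro i
      exact pow_nonneg (JacobiAux.factor_pos hq hq1 (by omega)).le 3
    · intro i
      exact pow_le_one₀ (JacobiAux.factor_pos hq hq1 (by omega)).le
        (JacobiAux.factor_le_one hq hq1) 
    · exact hcube
  constructor
  · rw [hmain, hprod.tprod_eq]
  · rw [hmain]
    positivity
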